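/- Let f ∈ K[x,y] be a weakly tame polynomial and let l, m be nonnegative integers. Then there exists a positive integer d such that f is quasi-homogeneous of degree d with weights (l,m) if and only if the K[x,y]-module V_f is freely generated by the Hamiltonian vector field X₀ = (−f_y, f_x) and the vector field X_* = (l·x, m·y). -/

import Mathlib

open MvPolynomial

/-- `X ∈ V_f`: the pair `X = (P, Q)` defines a polynomial vector field
`P ∂/∂x + Q ∂/∂y` admitting the curve `f = 0` as an invariant curve,
i.e. `P f_x + Q f_y = k f` for some cofactor `k`. -/
def VfMem {K : Type*} [Field K] (f : MvPolynomial (Fin 2) K)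
    (X : MvPolynomial (Fin 2) K × MvPolynomial (Fin 2) K) : Prop :=
  ∃ k : MvPolynomial (Fin 2) K,
    X.1 * pderiv (0 : Fin 2) f + X.2 * pderiv (1 : Fin 2) f = k * f

/-- The `K[x,y]`-module `V_f` is freely generated by `v₀` and `v₁`:
both belong to `V_f`, and every element of `V_f` is a unique
`K[x,y]`-linear combination of `v₀` and `v₁`. -/
def FreelyGen {K : Type*} [Field K] (f : MvPolynomial (Fin 2) K)
    (v₀ v₁ : MvPolynomial (Fin 2) K × MvPolynomial (Fin 2) K) : Prop :=
  VfMem f v₀ ∧ VfMem f v₁ ∧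
    ∀ w, VfMem f w →
      ∃! c : MvPolynomial (Fin 2) K × MvPolynomial (Fin 2) K,
        w = c.1 • v₀ + c.2 • v₁


namespace Stmt4Aux

/-- Lexicographic order on ℕ³ (explicit, omega-friendly). -/
def lexLe (a b : ℕ × ℕ × ℕ) : Prop :=
  a.1 < b.1 ∨ (a.1 = b.1 ∧ (a.2.1 < b.2.1 ∨ (a.2.1 = b.2.1 ∧ a.2.2 ≤ b.2.2)))

/-- Weighted-degree-plus-exponents triple of a monomial exponent. -/
def T (l m : ℕ) (s : Fin 2 →₀ ℕ) : ℕ × ℕ × ℕ := (l * s 0 + m * s 1, s 0, s 1)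

lemma lexLe_total (a b : ℕ × ℕ × ℕ) : lexLe a b ∨ lexLe b a := by
  unfold lexLe; omega

lemma lexLe_fst {a b : ℕ × ℕ × ℕ} (h : lexLe a b) : a.1 ≤ b.1 := by
  unfold lexLe at h; omega

lemma T_add (l m : ℕ) (u v : Fin 2 →₀ ℕ) : T l m (u + v) = T l m u + T l m v := by
  simp only [T, Finsupp.add_apply, Prod.mk_add_mk, Prod.mk.injEq]
  exact ⟨by ring, trivial⟩

lemma T_inj {l m : ℕ} {u v : Fin 2 →₀ ℕ} (h : T l m u = T l m v) : u = v := by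
  simp only [T, Prod.mk.injEq] at h
  ext i
  fin_cases i
  · exact h.2.1
  · exact h.2.2

lemma lexLe_cancel {a b c d : ℕ × ℕ × ℕ} (h1 : lexLe a c) (h2 : lexLe b d)
    (h : a + b = c + d) : a = c ∧ b = d := by
  obtain ⟨a1, a2, a3⟩ := a; obtain ⟨b1, b2, b3⟩ := b
  obtain ⟨c1, c2, c3⟩ := c; obtain ⟨d1, d2, d3⟩ := d
  simp only [lexLe, Prod.mk_add_mk, Prod.mk.injEq] at *
  omega

lemma exists_lexmax (l m : ℕ) (S : Finset (Fin 2 →₀ ℕ)) (hS : S.Nonempty) :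
    ∃ M ∈ S, ∀ a ∈ S, lexLe (T l m a) (T l m M) := by
  classical
  induction S using Finset.induction_on with
  | empty => exact absurd hS (by simp)
  | @insert a S' ha ih =>
    rcases S'.eq_empty_or_nonempty with h | h
    · subst h
      refine ⟨a, by simp, ?_⟩
      intro b hb
      simp only [Finset.mem_insert, Finset.notMem_empty, or_false] at hb
      subst hb
      rcases lexLe_total (T l m b) (T l m b) with h | h <;> exact h
    · obtain ⟨M, hM, hMmax⟩ := ih h
      rcases lexLe_total (T l m a) (T l m M) with hc | hc
      · refine ⟨M, Finset.mem_insert_of_mem hM, ?_⟩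
        intro b hb
        rcases Finset.mem_insert.mp hb with rfl | hb
        · exact hc
        · exact hMmax b hb
      · refine ⟨a, Finset.mem_insert_self a _, ?_⟩
        intro b hb
        rcases Finset.mem_insert.mp hb with rfl | hb
        · rcases lexLe_total (T l m b) (T l m b) with h' | h' <;> exact h'
        · rcases lexLe_total (T l m b) (T l m a) with h' | h'
          · exact h'
          · -- b ≤ M ≤ a... need transitivity; easier: lexLe trans
            have hbM := hMmax b hb
            -- lexLe (T b) (T M) and lexLe (T M) (T a)
            revert hbM hc
            unfold lexLe
            omega




variable {K : Type*} [Field K]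

lemma coeff_X_mul_pderiv (i : Fin 2) (f : MvPolynomial (Fin 2) K) (s : Fin 2 →₀ ℕ) :
    coeff s (X i * pderiv i f) = (s i : K) * coeff s f := by
  classical
  induction f using MvPolynomial.induction_on' with
  | add p q hp hq =>
    simp only [map_add, mul_add, coeff_add, hp, hq]
    try ring
  | monomial t a =>
    rw [pderiv_monomial]
    rw [show (X i : MvPolynomial (Fin 2) K) = monomial (Finsupp.single i 1) 1 from rfl]
    rw [monomial_mul, one_mul]
    by_cases ht : t i = 0
    · have : (a * (t i : K)) = 0 := by rw [ht]; simp
      rw [this, map_zero, coeff_zero, coeff_monomial]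
      split_ifs with h
      · subst h; rw [ht]; simp
      · simp
    · have hsum : Finsupp.single i 1 + (t - Finsupp.single i 1) = t := by
        ext j
        by_cases hij : i = j
        · subst hij
          simp only [Finsupp.add_apply, Finsupp.tsub_apply, Finsupp.single_eq_same]
          omega
        · simp only [Finsupp.add_apply, Finsupp.tsub_apply,
            Finsupp.single_apply, if_neg hij]
          omega
      rw [hsum, coeff_monomial, coeff_monomial]
      split_ifs with h
      · subst h; ring
      · simp

lemma pderiv_eq_zero_of_support (i : Fin 2) (f : MvPolynomial (Fin 2) K)
    (h : ∀ s ∈ f.support, s i = 0) : pderiv i f = 0 := by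
  have hX : (X i : MvPolynomial (Fin 2) K) * pderiv i f = 0 := by
    apply MvPolynomial.ext
    intro s
    rw [coeff_X_mul_pderiv, coeff_zero]
    by_cases hs : s ∈ f.support
    · rw [h s hs]; simp
    · rw [MvPolynomial.notMem_support_iff.mp hs, mul_zero]
  rcases mul_eq_zero.mp hX with h' | h'
  · exact absurd h' (X_ne_zero i)
  · exact h'

lemma coeff_mul_lexmax (l m : ℕ) {p t : MvPolynomial (Fin 2) K} {sp st : Fin 2 →₀ ℕ}
    (hmp : ∀ a ∈ p.support, lexLe (T l m a) (T l m sp))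
    (hmt : ∀ a ∈ t.support, lexLe (T l m a) (T l m st)) :
    coeff (sp + st) (p * t) = coeff sp p * coeff st t := by
  classical
  rw [coeff_mul]
  apply Finset.sum_eq_single_of_mem (sp, st)
  · rw [Finset.HasAntidiagonal.mem_antidiagonal]
  · rintro ⟨u, v⟩ huv hne
    rw [Finset.HasAntidiagonal.mem_antidiagonal] at huv
    by_cases hu : u ∈ p.support
    · by_cases hv : v ∈ t.support
      · exfalso
        have hT : T l m u + T l m v = T l m sp + T l m st := by
          rw [← T_add, ← T_add, huv]
        obtain ⟨h1, h2⟩ := lexLe_cancel (hmp u hu) (hmt v hv) hT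
        exact hne (by rw [T_inj h1, T_inj h2])
      · rw [MvPolynomial.notMem_support_iff.mp hv, mul_zero]
    · rw [MvPolynomial.notMem_support_iff.mp hu, zero_mul]

lemma coeff_aeval_X_eq_zero {i j : Fin 2} (hij : i ≠ j) (q : Polynomial K)
    (s : Fin 2 →₀ ℕ) (hs : s j ≠ 0) :
    coeff s (Polynomial.aeval (X i : MvPolynomial (Fin 2) K) q) = 0 := by
  classical
  induction q using Polynomial.induction_on' with
  | add p q hp hq => rw [map_add, coeff_add, hp, hq, add_zero]
  | monomial n a =>
    rw [Polynomial.aeval_monomial, MvPolynomial.algebraMap_eq, coeff_C_mul, coeff_X_pow]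
    have hne : Finsupp.single i n ≠ s := by
      intro h
      apply hs
      rw [← h, Finsupp.single_apply, if_neg hij]
    rw [if_neg hne, mul_zero]

lemma not_isUnit_X (i : Fin 2) : ¬ IsUnit (X i : MvPolynomial (Fin 2) K) := by
  intro h
  have h2 : IsUnit (constantCoeff (X i : MvPolynomial (Fin 2) K)) := h.map constantCoeff
  rw [constantCoeff_X] at h2
  exact not_isUnit_zero h2

lemma support_subset_of_dvd_aeval {i j : Fin 2} (hij : i ≠ j) {p : MvPolynomial (Fin 2) K}
    (hp : p ≠ 0) {q : Polynomial K} (hq : q ≠ 0)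
    (hdvd : p ∣ Polynomial.aeval (X i : MvPolynomial (Fin 2) K) q) :
    ∀ u ∈ p.support, u j = 0 := by
  classical
  set A := Polynomial.aeval (X i : MvPolynomial (Fin 2) K) q with hA
  have hAne : A ≠ 0 := by
    intro h0
    exact MvPolynomial.transcendental_X K i ⟨q, hq, h0⟩
  obtain ⟨t, ht⟩ := hdvd
  have htne : t ≠ 0 := by
    intro h0; rw [h0, mul_zero] at ht; exact hAne ht
  -- weights: w s = s j  (l,m chosen so that l * s 0 + m * s 1 = s j)
  obtain ⟨l, m, hw⟩ : ∃ l m : ℕ, ∀ s : Fin 2 →₀ ℕ, l * s 0 + m * s 1 = s j := by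
    fin_cases j
    · exact ⟨1, 0, fun s => by simp⟩
    · exact ⟨0, 1, fun s => by simp⟩
  obtain ⟨sp, hspmem, hspmax⟩ := exists_lexmax l m p.support
    (Finset.nonempty_iff_ne_empty.mpr (fun h => hp (MvPolynomial.support_eq_empty.mp h)))
  obtain ⟨st, hstmem, hstmax⟩ := exists_lexmax l m t.support
    (Finset.nonempty_iff_ne_empty.mpr (fun h => htne (MvPolynomial.support_eq_empty.mp h)))
  have hco : coeff (sp + st) A = coeff sp p * coeff st t := by
    rw [ht]; exact coeff_mul_lexmax l m hspmax hstmax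
  have hmem : sp + st ∈ A.support := by
    rw [MvPolynomial.mem_support_iff, hco]
    exact mul_ne_zero (MvPolynomial.mem_support_iff.mp hspmem)
      (MvPolynomial.mem_support_iff.mp hstmem)
  have hAj : (sp + st) j = 0 := by
    by_contra hne
    exact MvPolynomial.mem_support_iff.mp hmem (coeff_aeval_X_eq_zero hij q _ hne)
  have hspj : sp j = 0 := by
    have := Finsupp.add_apply sp st j
    omega
  intro u hu
  have h1 := lexLe_fst (hspmax u hu)
  simp only [T] at h1
  rw [hw u, hw sp] at h1
  omega

lemma isUnit_of_dvd_pderivs {f p : MvPolynomial (Fin 2) K}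
    (hwt : FiniteDimensional K
      (MvPolynomial (Fin 2) K ⧸
        Ideal.span {pderiv (0 : Fin 2) f, pderiv (1 : Fin 2) f}))
    (h0 : p ∣ pderiv (0 : Fin 2) f) (h1 : p ∣ pderiv (1 : Fin 2) f) : IsUnit p := by
  classical
  haveI := hwt
  set I : Ideal (MvPolynomial (Fin 2) K) := Ideal.span {pderiv (0 : Fin 2) f, pderiv (1 : Fin 2) f} with hI
  set J : Ideal (MvPolynomial (Fin 2) K) := Ideal.span {p} with hJ
  have hIJ : I ≤ J := by
    rw [hI, Ideal.span_le]
    intro a ha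
    rcases ha with ha | ha
    · rw [ha]; exact Ideal.mem_span_singleton.mpr h0
    · rw [Set.mem_singleton_iff.mp ha]; exact Ideal.mem_span_singleton.mpr h1
  let φ : ((MvPolynomial (Fin 2) K) ⧸ I) →ₐ[K] ((MvPolynomial (Fin 2) K) ⧸ J) :=
    Ideal.Quotient.liftₐ I (Ideal.Quotient.mkₐ K J)
      (fun a ha => by
        rw [Ideal.Quotient.mkₐ_eq_mk, Ideal.Quotient.eq_zero_iff_mem]
        exact hIJ ha)
  have hφsurj : Function.Surjective φ := by
    intro y
    obtain ⟨a, rfl⟩ := Ideal.Quotient.mk_surjective y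
    exact ⟨Ideal.Quotient.mk I a, rfl⟩
  have hfinJ : FiniteDimensional K ((MvPolynomial (Fin 2) K) ⧸ J) :=
    Module.Finite.of_surjective φ.toLinearMap hφsurj
  -- get nonzero annihilating polynomials for X 0 and X 1 in R ⧸ J
  have key : ∀ i : Fin 2, ∃ q : Polynomial K, q ≠ 0 ∧
      p ∣ Polynomial.aeval (X i : MvPolynomial (Fin 2) K) q := by
    intro i
    have hint : IsIntegral K (Ideal.Quotient.mkₐ K J (X i : MvPolynomial (Fin 2) K)) :=
      IsIntegral.of_finite K _
    obtain ⟨q, hqmonic, hq⟩ := hint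
    rw [← Polynomial.aeval_def] at hq
    refine ⟨q, hqmonic.ne_zero, ?_⟩
    rw [← Ideal.mem_span_singleton, ← hJ, ← Ideal.Quotient.eq_zero_iff_mem]
    have h5 := Polynomial.aeval_algHom_apply (Ideal.Quotient.mkₐ K J)
      (X i : MvPolynomial (Fin 2) K) q
    rw [hq] at h5
    rw [← Ideal.Quotient.mkₐ_eq_mk K J]
    exact h5.symm
  have hpne : p ≠ 0 := by
    intro h
    obtain ⟨q, hq, hdvd⟩ := key 0
    rw [h, zero_dvd_iff] at hdvd
    exact MvPolynomial.transcendental_X K (0 : Fin 2) ⟨q, hq, hdvd⟩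
  obtain ⟨q0, hq0, hd0⟩ := key 0
  obtain ⟨q1, hq1, hd1⟩ := key 1
  have hsupp0 : ∀ u ∈ p.support, u 1 = 0 :=
    support_subset_of_dvd_aeval (by decide : (0 : Fin 2) ≠ 1) hpne hq0 hd0
  have hsupp1 : ∀ u ∈ p.support, u 0 = 0 :=
    support_subset_of_dvd_aeval (by decide : (1 : Fin 2) ≠ 0) hpne hq1 hd1
  -- p is a nonzero constant
  have hpC : p = C (coeff 0 p) := by
    apply MvPolynomial.ext
    intro s
    rw [coeff_C]
    by_cases hs : s ∈ p.support
    · have hs0 := hsupp1 s hs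
      have hs1 := hsupp0 s hs
      have : s = 0 := by
        ext i; fin_cases i
        · exact hs0
        · exact hs1
      rw [if_pos this.symm, this]
    · rw [MvPolynomial.notMem_support_iff.mp hs]
      split_ifs with h
      · rw [← h] at hs
        rw [MvPolynomial.notMem_support_iff.mp hs]
      · rfl
  rw [hpC]
  apply IsUnit.map
  apply isUnit_iff_ne_zero.mpr
  intro h
  rw [h, map_zero] at hpC
  exact hpne hpC

lemma syzygy {fx fy A B : MvPolynomial (Fin 2) K} (hrp : IsRelPrime fx fy)
    (h : A * fx + B * fy = 0) : ∃ g, A = -(g * fy) ∧ B = g * fx := by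
  by_cases hfy : fy = 0
  · subst hfy
    have hfxu : IsUnit fx := hrp dvd_rfl (dvd_zero _)
    obtain ⟨u, hu⟩ := hfxu
    have hA : A = 0 := by
      have h' : A * fx = 0 := by linear_combination h
      rcases mul_eq_zero.mp h' with h'' | h''
      · exact h''
      · exact absurd (h'' ▸ hu.symm ▸ rfl : (u : MvPolynomial (Fin 2) K) = 0)
          u.ne_zero
    refine ⟨B * ↑u⁻¹, by rw [hA]; ring, ?_⟩
    rw [mul_assoc, ← hu, Units.inv_mul, mul_one]
  · have hdvd : fy ∣ A * fx := ⟨-B, by linear_combination h⟩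
    have hdA : fy ∣ A := hrp.symm.dvd_of_dvd_mul_right hdvd
    obtain ⟨g, hA⟩ := hdA
    refine ⟨-g, by rw [hA]; ring, ?_⟩
    have h2 : fy * (g * fx + B) = 0 := by
      rw [hA] at h; linear_combination h
    have h3 := (mul_eq_zero.mp h2).resolve_left hfy
    linear_combination h3

lemma euler {f : MvPolynomial (Fin 2) K} {l m d : ℕ}
    (h : ∀ s ∈ f.support, l * s 0 + m * s 1 = d) :
    ((l : MvPolynomial (Fin 2) K) * X 0) * pderiv (0 : Fin 2) f
      + ((m : MvPolynomial (Fin 2) K) * X 1) * pderiv (1 : Fin 2) f = C (d : K) * f := by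
  apply MvPolynomial.ext
  intro s
  rw [coeff_add, mul_assoc, mul_assoc,
    ← map_natCast (C : K →+* MvPolynomial (Fin 2) K) l,
    ← map_natCast (C : K →+* MvPolynomial (Fin 2) K) m,
    coeff_C_mul, coeff_C_mul, coeff_C_mul,
    coeff_X_mul_pderiv, coeff_X_mul_pderiv]
  have hcast : ((l : K)) * ((s 0 : K) * coeff s f) + (m : K) * ((s 1 : K) * coeff s f)
      = ((l * s 0 + m * s 1 : ℕ) : K) * coeff s f := by
    push_cast; ring
  rw [hcast]
  by_cases hs : s ∈ f.support
  · rw [h s hs]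
  · rw [MvPolynomial.notMem_support_iff.mp hs, mul_zero, mul_zero]

/-- coefficient form of the cofactor equation for `X_*`. -/
lemma coeff_eq {f k : MvPolynomial (Fin 2) K} {l m : ℕ}
    (hk : ((l : MvPolynomial (Fin 2) K) * X 0) * pderiv (0 : Fin 2) f
      + ((m : MvPolynomial (Fin 2) K) * X 1) * pderiv (1 : Fin 2) f = k * f)
    (s : Fin 2 →₀ ℕ) :
    ((l * s 0 + m * s 1 : ℕ) : K) * coeff s f = coeff s (k * f) := by
  have h := congrArg (coeff s) hk
  rw [coeff_add, mul_assoc, mul_assoc,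
    ← map_natCast (C : K →+* MvPolynomial (Fin 2) K) l,
    ← map_natCast (C : K →+* MvPolynomial (Fin 2) K) m,
    coeff_C_mul, coeff_C_mul, coeff_X_mul_pderiv, coeff_X_mul_pderiv] at h
  rw [← h]
  push_cast; ring

lemma supp_cofactor_wzero [CharZero K] {f k : MvPolynomial (Fin 2) K} {l m : ℕ}
    (hf : f ≠ 0)
    (hco : ∀ s : Fin 2 →₀ ℕ, ((l * s 0 + m * s 1 : ℕ) : K) * coeff s f = coeff s (k * f)) :
    ∀ u ∈ k.support, l * u 0 + m * u 1 = 0 := by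
  by_cases hk0 : k = 0
  · intro u hu; rw [hk0] at hu; simp at hu
  obtain ⟨sk, hskmem, hskmax⟩ := exists_lexmax l m k.support
    (Finset.nonempty_iff_ne_empty.mpr (fun h => hk0 (MvPolynomial.support_eq_empty.mp h)))
  obtain ⟨sf, hsfmem, hsfmax⟩ := exists_lexmax l m f.support
    (Finset.nonempty_iff_ne_empty.mpr (fun h => hf (MvPolynomial.support_eq_empty.mp h)))
  suffices hsk0 : l * sk 0 + m * sk 1 = 0 by
    intro u hu
    have h1 := lexLe_fst (hskmax u hu)
    simp only [T] at h1
    omega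
  by_contra hpos
  have hS : coeff (sk + sf) (k * f) = coeff sk k * coeff sf f :=
    coeff_mul_lexmax l m hskmax hsfmax
  have hne : coeff (sk + sf) (k * f) ≠ 0 := by
    rw [hS]
    exact mul_ne_zero (MvPolynomial.mem_support_iff.mp hskmem)
      (MvPolynomial.mem_support_iff.mp hsfmem)
  have heq := hco (sk + sf)
  have hcS : coeff (sk + sf) f ≠ 0 := by
    intro h; rw [h, mul_zero] at heq; exact hne heq.symm
  have hmem : sk + sf ∈ f.support := MvPolynomial.mem_support_iff.mpr hcS
  have h2 := lexLe_fst (hsfmax _ hmem)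
  simp only [T, Finsupp.add_apply] at h2
  have h3 : l * (sk 0 + sf 0) + m * (sk 1 + sf 1)
      = (l * sk 0 + m * sk 1) + (l * sf 0 + m * sf 1) := by ring
  omega

lemma cofactor_const [CharZero K] {f k : MvPolynomial (Fin 2) K} {l m : ℕ}
    (hkw : ∀ u ∈ k.support, l * u 0 + m * u 1 = 0)
    (hco : ∀ s : Fin 2 →₀ ℕ, ((l * s 0 + m * s 1 : ℕ) : K) * coeff s f = coeff s (k * f)) :
    ∀ s ∈ f.support, k = C ((l * s 0 + m * s 1 : ℕ) : K) := by
  classical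
  intro s hs
  set n := l * s 0 + m * s 1 with hn
  set fn := (f.support.filter (fun t => l * t 0 + m * t 1 = n)).sum
      (fun t => monomial t (coeff t f)) with hfn
  have hfn_coeff : ∀ t, coeff t fn = if l * t 0 + m * t 1 = n then coeff t f else 0 := by
    intro t
    rw [hfn, MvPolynomial.coeff_sum]
    simp only [coeff_monomial]
    rw [Finset.sum_ite_eq']
    simp only [Finset.mem_filter]
    by_cases hw : l * t 0 + m * t 1 = n
    · by_cases ht : t ∈ f.support
      · rw [if_pos ⟨ht, hw⟩, if_pos hw]
      · rw [if_neg (fun h => ht h.1), if_pos hw, MvPolynomial.notMem_support_iff.mp ht]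
    · rw [if_neg (fun h => hw h.2), if_neg hw]
  have h1 : k * fn = C ((n : K)) * fn := by
    apply MvPolynomial.ext
    intro t
    rw [coeff_C_mul, hfn_coeff]
    by_cases hw : l * t 0 + m * t 1 = n
    · rw [if_pos hw]
      have e1 : coeff t (k * fn) = coeff t (k * f) := by
        rw [coeff_mul, coeff_mul]
        apply Finset.sum_congr rfl
        rintro ⟨u, v⟩ huv
        rw [Finset.HasAntidiagonal.mem_antidiagonal] at huv
        by_cases hu : u ∈ k.support
        · have hwu := hkw u hu
          have h0 : t 0 = u 0 + v 0 := by rw [← huv, Finsupp.add_apply]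
          have h1 : t 1 = u 1 + v 1 := by rw [← huv, Finsupp.add_apply]
          have e2 : l * t 0 + m * t 1 = (l * u 0 + m * u 1) + (l * v 0 + m * v 1) := by
            rw [h0, h1]; ring
          have hwv : l * v 0 + m * v 1 = n := by omega
          congr 1
          rw [hfn_coeff, if_pos hwv]
        · rw [MvPolynomial.notMem_support_iff.mp hu, zero_mul, zero_mul]
      rw [e1, ← hco t, hw]
    · rw [if_neg hw, mul_zero, coeff_mul]
      apply Finset.sum_eq_zero
      rintro ⟨u, v⟩ huv
      rw [Finset.HasAntidiagonal.mem_antidiagonal] at huv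
      by_cases hu : u ∈ k.support
      · have hwu := hkw u hu
        have h0 : t 0 = u 0 + v 0 := by rw [← huv, Finsupp.add_apply]
        have h1 : t 1 = u 1 + v 1 := by rw [← huv, Finsupp.add_apply]
        have e2 : l * t 0 + m * t 1 = (l * u 0 + m * u 1) + (l * v 0 + m * v 1) := by
          rw [h0, h1]; ring
        have hwv : ¬ (l * v 0 + m * v 1 = n) := by omega
        rw [hfn_coeff, if_neg hwv, mul_zero]
      · rw [MvPolynomial.notMem_support_iff.mp hu, zero_mul]
  have hfn_ne : fn ≠ 0 := by
    intro h
    have h4 := hfn_coeff s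
    rw [h, coeff_zero, if_pos hn.symm] at h4
    exact MvPolynomial.mem_support_iff.mp hs h4.symm
  have h2 : (k - C ((n : K))) * fn = 0 := by linear_combination h1
  rcases mul_eq_zero.mp h2 with h | h
  · exact sub_eq_zero.mp h
  · exact absurd h hfn_ne

end Stmt4Aux

/-- For a weakly tame `f ∈ K[x,y]` and nonnegative integers
`l, m`: there exists a positive integer `d` such that `f` is quasi-homogeneous
of degree `d` with weights `(l, m)` (every monomial `x^a y^b` of `f` satisfies
`l·a + m·b = d`) iff `V_f` is freely generated by `X₀ = (-f_y, f_x)` and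
`X_* = (l·x, m·y)`. -/
theorem stmt4 (K : Type*) [Field K] [Algebra K ℂ]
    (f : MvPolynomial (Fin 2) K) (l m : ℕ)
    (hwt : FiniteDimensional K
      (MvPolynomial (Fin 2) K ⧸
        Ideal.span {pderiv (0 : Fin 2) f, pderiv (1 : Fin 2) f})) :
    (∃ d : ℕ, 0 < d ∧ ∀ s ∈ f.support, l * s 0 + m * s 1 = d) ↔
      FreelyGen f (-(pderiv (1 : Fin 2) f), pderiv (0 : Fin 2) f)
        ((l : MvPolynomial (Fin 2) K) * X 0, (m : MvPolynomial (Fin 2) K) * X 1) := by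
  classical
  haveI : CharZero K := (algebraMap K ℂ).charZero
  have hnotboth : ¬(pderiv (0 : Fin 2) f = 0 ∧ pderiv (1 : Fin 2) f = 0) := by
    rintro ⟨h0, h1⟩
    exact Stmt4Aux.not_isUnit_X (0 : Fin 2)
      (Stmt4Aux.isUnit_of_dvd_pderivs hwt (by rw [h0]; exact dvd_zero _) (by rw [h1]; exact dvd_zero _))
  have hfne : f ≠ 0 := by
    intro h
    exact hnotboth ⟨by rw [h, map_zero], by rw [h, map_zero]⟩
  constructor
  · rintro ⟨d, hdpos, hqh⟩
    have hrp : IsRelPrime (pderiv (0 : Fin 2) f) (pderiv (1 : Fin 2) f) :=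
      fun p h0 h1 => Stmt4Aux.isUnit_of_dvd_pderivs hwt h0 h1
    have hE := Stmt4Aux.euler (K := K) hqh
    have hdK : ((d : K)) ≠ 0 := Nat.cast_ne_zero.mpr hdpos.ne'
    have hCd : (C ((d : K)) : MvPolynomial (Fin 2) K) ≠ 0 := C_ne_zero.mpr hdK
    refine ⟨⟨0, ?_⟩, ⟨C ((d : K)), hE⟩, ?_⟩
    · show -(pderiv (1 : Fin 2) f) * pderiv (0 : Fin 2) f
        + pderiv (0 : Fin 2) f * pderiv (1 : Fin 2) f = 0 * f
      ring
    · intro w hw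
      obtain ⟨k, hk⟩ := hw
      have hAB : (C ((d : K)) * w.1 - k * ((l : MvPolynomial (Fin 2) K) * X 0))
            * pderiv (0 : Fin 2) f
          + (C ((d : K)) * w.2 - k * ((m : MvPolynomial (Fin 2) K) * X 1))
            * pderiv (1 : Fin 2) f = 0 := by
        linear_combination C ((d : K)) * hk - k * hE
      obtain ⟨g, hA, hB⟩ := Stmt4Aux.syzygy hrp hAB
      have h2a : C ((d : K)⁻¹) * (C ((d : K)) * w.1) = w.1 := by
        rw [← mul_assoc, ← C_mul, inv_mul_cancel₀ hdK, C_1, one_mul]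
      have h2b : C ((d : K)⁻¹) * (C ((d : K)) * w.2) = w.2 := by
        rw [← mul_assoc, ← C_mul, inv_mul_cancel₀ hdK, C_1, one_mul]
      have hrep : w = (C ((d : K)⁻¹) * g) • (-(pderiv (1 : Fin 2) f), pderiv (0 : Fin 2) f)
          + (C ((d : K)⁻¹) * k) • ((l : MvPolynomial (Fin 2) K) * X 0,
            (m : MvPolynomial (Fin 2) K) * X 1) := by
        refine Prod.ext_iff.mpr ⟨?_, ?_⟩
        · simp only [Prod.fst_add, Prod.smul_fst, smul_eq_mul]
          linear_combination C ((d : K)⁻¹) * hA - h2a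
        · simp only [Prod.snd_add, Prod.smul_snd, smul_eq_mul]
          linear_combination C ((d : K)⁻¹) * hB - h2b
      refine ⟨(C ((d : K)⁻¹) * g, C ((d : K)⁻¹) * k), hrep, ?_⟩
      rintro ⟨c1, c2⟩ hc
      have hc1 := congrArg Prod.fst hc
      have hc2 := congrArg Prod.snd hc
      have hr1 := congrArg Prod.fst hrep
      have hr2 := congrArg Prod.snd hrep
      simp only [Prod.fst_add, Prod.smul_fst, Prod.snd_add, Prod.smul_snd,
        smul_eq_mul] at hc1 hc2 hr1 hr2
      have e1 : (c1 - C ((d : K)⁻¹) * g) * (-(pderiv (1 : Fin 2) f))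
          + (c2 - C ((d : K)⁻¹) * k) * ((l : MvPolynomial (Fin 2) K) * X 0) = 0 := by
        linear_combination hr1 - hc1
      have e2 : (c1 - C ((d : K)⁻¹) * g) * pderiv (0 : Fin 2) f
          + (c2 - C ((d : K)⁻¹) * k) * ((m : MvPolynomial (Fin 2) K) * X 1) = 0 := by
        linear_combination hr2 - hc2
      have hb : (c2 - C ((d : K)⁻¹) * k) * (C ((d : K)) * f) = 0 := by
        linear_combination pderiv (0 : Fin 2) f * e1 + pderiv (1 : Fin 2) f * e2
          - (c2 - C ((d : K)⁻¹) * k) * hE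
      have hb0 : c2 = C ((d : K)⁻¹) * k := by
        rcases mul_eq_zero.mp hb with h | h
        · exact sub_eq_zero.mp h
        · exact absurd h (mul_ne_zero hCd hfne)
      have ha0 : c1 = C ((d : K)⁻¹) * g := by
        rw [hb0] at e1 e2
        simp only [sub_self, zero_mul, add_zero] at e1 e2
        rcases mul_eq_zero.mp e2 with h | h
        · exact sub_eq_zero.mp h
        · rcases mul_eq_zero.mp e1 with h' | h'
          · exact sub_eq_zero.mp h'
          · exact absurd ⟨h, neg_eq_zero.mp h'⟩ hnotboth
      rw [Prod.mk.injEq]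
      exact ⟨ha0, hb0⟩
  · rintro ⟨hv0, hv1, hgen⟩
    obtain ⟨k, hk⟩ := hv1
    have hk' : ((l : MvPolynomial (Fin 2) K) * X 0) * pderiv (0 : Fin 2) f
        + ((m : MvPolynomial (Fin 2) K) * X 1) * pderiv (1 : Fin 2) f = k * f := hk
    have hco := fun s => Stmt4Aux.coeff_eq hk' s
    have hkw := Stmt4Aux.supp_cofactor_wzero hfne hco
    have hkC := Stmt4Aux.cofactor_const hkw hco
    obtain ⟨s₀, hs₀⟩ := Finset.nonempty_iff_ne_empty.mpr
      (fun h => hfne (MvPolynomial.support_eq_empty.mp h))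
    have hall : ∀ s ∈ f.support, l * s 0 + m * s 1 = l * s₀ 0 + m * s₀ 1 := by
      intro s hs
      have h1 := hkC s hs
      have h2 := hkC s₀ hs₀
      have h3 : (((l * s 0 + m * s 1 : ℕ) : K)) = ((l * s₀ 0 + m * s₀ 1 : ℕ) : K) :=
        (C_inj K _ _).mp (h1.symm.trans h2)
      exact_mod_cast h3
    by_cases hd : 0 < l * s₀ 0 + m * s₀ 1
    · exact ⟨_, hd, hall⟩
    · exfalso
      have hd0 : l * s₀ 0 + m * s₀ 1 = 0 := by omega
      rcases Nat.eq_zero_or_pos l with hl | hl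
      · rcases Nat.eq_zero_or_pos m with hm | hm
        · -- degenerate case l = m = 0 : uniqueness fails
          subst hl; subst hm
          obtain ⟨c, hc, hcu⟩ := hgen 0 ⟨0, by
            show (0 : MvPolynomial (Fin 2) K) * pderiv (0 : Fin 2) f
              + (0 : MvPolynomial (Fin 2) K) * pderiv (1 : Fin 2) f = 0 * f
            ring⟩
          have h1 : ((0 : MvPolynomial (Fin 2) K), (1 : MvPolynomial (Fin 2) K)) = c := by
            apply hcu
            refine Prod.ext_iff.mpr ⟨?_, ?_⟩ <;>
              simp [Prod.fst_add, Prod.smul_fst, Prod.snd_add, Prod.smul_snd, smul_eq_mul]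
          have h2 : ((0 : MvPolynomial (Fin 2) K), (0 : MvPolynomial (Fin 2) K)) = c := by
            apply hcu
            refine Prod.ext_iff.mpr ⟨?_, ?_⟩ <;>
              simp [Prod.fst_add, Prod.smul_fst, Prod.snd_add, Prod.smul_snd, smul_eq_mul]
          have h3 := h1.trans h2.symm
          rw [Prod.mk.injEq] at h3
          exact one_ne_zero h3.2
        · -- l = 0, m > 0, degree 0 : f depends only on x
          subst hl
          have hfy : pderiv (1 : Fin 2) f = 0 := by
            apply Stmt4Aux.pderiv_eq_zero_of_support
            intro s hs
            have h5 := hall s hs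
            have h6 : m * s 1 = 0 := by omega
            rcases Nat.mul_eq_zero.mp h6 with h | h
            · exact absurd h hm.ne'
            · exact h
          obtain ⟨c, hc, -⟩ := hgen (f, 0) ⟨pderiv (0 : Fin 2) f, by
            show f * pderiv (0 : Fin 2) f + 0 * pderiv (1 : Fin 2) f
              = pderiv (0 : Fin 2) f * f
            ring⟩
          have hc1 := congrArg Prod.fst hc
          simp only [Prod.fst_add, Prod.smul_fst, smul_eq_mul] at hc1
          rw [hfy] at hc1
          simp only [Nat.cast_zero, zero_mul, mul_zero, neg_zero, add_zero, zero_add] at hc1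
          exact hfne hc1
      · rcases Nat.eq_zero_or_pos m with hm | hm
        · -- m = 0, l > 0, degree 0 : f depends only on y
          subst hm
          have hfx : pderiv (0 : Fin 2) f = 0 := by
            apply Stmt4Aux.pderiv_eq_zero_of_support
            intro s hs
            have h5 := hall s hs
            have h6 : l * s 0 = 0 := by omega
            rcases Nat.mul_eq_zero.mp h6 with h | h
            · exact absurd h hl.ne'
            · exact h
          obtain ⟨c, hc, -⟩ := hgen (0, f) ⟨pderiv (1 : Fin 2) f, by
            show 0 * pderiv (0 : Fin 2) f + f * pderiv (1 : Fin 2) f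
              = pderiv (1 : Fin 2) f * f
            ring⟩
          have hc2 := congrArg Prod.snd hc
          simp only [Prod.snd_add, Prod.smul_snd, smul_eq_mul] at hc2
          rw [hfx] at hc2
          simp only [Nat.cast_zero, zero_mul, mul_zero, neg_zero, add_zero, zero_add] at hc2
          exact hfne hc2
        · -- l > 0, m > 0, degree 0 : f constant
          apply hnotboth
          constructor
          · apply Stmt4Aux.pderiv_eq_zero_of_support
            intro s hs
            have h5 := hall s hs
            have h6 : l * s 0 = 0 := by omega
            rcases Nat.mul_eq_zero.mp h6 with h | h
            · exact absurd h hl.ne'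
            · exact h
          · apply Stmt4Aux.pderiv_eq_zero_of_support
            intro s hs
            have h5 := hall s hs
            have h6 : m * s 1 = 0 := by omega
            rcases Nat.mul_eq_zero.mp h6 with h | h
            · exact absurd h hm.ne'
            · exact h
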